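/- Let f : ℝ^(m×n) → ℝ be convex differentiable, k ≥ 2, and suppose the minimum width d = min_{0≤i≤k} d_i satisfies d = d₀ or d = d_k (no bottleneck). Then every local minimum (M₁,…,M_k) of L_k(M₁,…,M_k) = f(M_k⋯M₁) satisfies: M_k⋯M₁ is a global minimum of f over all of ℝ^(m×n). -/

import Mathlib

attribute [local instance] Matrix.frobeniusNormedAddCommGroup Matrix.frobeniusNormedSpace

/-- Product `M (b-1) * ⋯ * M a` of a chain of matrices (identity when `b = a`,
junk value `0` when `b < a`). -/
def chainProd (d : ℕ → ℕ) (M : ∀ i : ℕ, Matrix (Fin (d (i + 1))) (Fin (d i)) ℝ)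
    (a : ℕ) : (b : ℕ) → Matrix (Fin (d b)) (Fin (d a)) ℝ
  | 0 => if h : 0 = a then by rw [← h]; exact 1 else 0
  | (b + 1) => if h : b + 1 = a then by rw [← h]; exact 1
      else M b * chainProd d M a b

/-- Extend a `Fin k`-indexed tuple of layer matrices to an `ℕ`-indexed one (by `0`). -/
def ext (d : ℕ → ℕ) (k : ℕ)
    (N : ∀ i : Fin k, Matrix (Fin (d (i.1 + 1))) (Fin (d i.1)) ℝ) :
    ∀ i : ℕ, Matrix (Fin (d (i + 1))) (Fin (d i)) ℝ :=
  fun i => if h : i < k then N ⟨i, h⟩ else 0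
variable {d : ℕ → ℕ}

lemma chainProd_same (M : ∀ i : ℕ, Matrix (Fin (d (i + 1))) (Fin (d i)) ℝ) (a : ℕ) :
    chainProd d M a a = 1 := by
  cases a with
  | zero => simp [chainProd]
  | succ b => simp [chainProd]

lemma chainProd_succ (M : ∀ i : ℕ, Matrix (Fin (d (i + 1))) (Fin (d i)) ℝ) {a b : ℕ}
    (h : a ≤ b) : chainProd d M a (b + 1) = M b * chainProd d M a b := by
  have : b + 1 ≠ a := by omega
  simp [chainProd, this]

lemma chainProd_split (M : ∀ i : ℕ, Matrix (Fin (d (i + 1))) (Fin (d i)) ℝ) {a b c : ℕ}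
    (hab : a ≤ b) (hbc : b ≤ c) :
    chainProd d M a c = chainProd d M b c * chainProd d M a b := by
  induction c, hbc using Nat.le_induction with
  | base => rw [chainProd_same, Matrix.one_mul]
  | succ c hbc ih =>
      rw [chainProd_succ M (le_trans hab hbc), chainProd_succ M hbc, ih, Matrix.mul_assoc]

lemma chainProd_of_lt (M : ∀ i : ℕ, Matrix (Fin (d (i + 1))) (Fin (d i)) ℝ) {a b : ℕ}
    (h : b < a) : chainProd d M a b = 0 := by
  induction b with
  | zero => simp [chainProd]; omega
  | succ b ih =>
      have h1 : b + 1 ≠ a := by omega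
      simp [chainProd, h1, ih (by omega)]

lemma chainProd_congr {M M' : ∀ i : ℕ, Matrix (Fin (d (i + 1))) (Fin (d i)) ℝ} {a b : ℕ}
    (h : ∀ i, a ≤ i → i < b → M i = M' i) :
    chainProd d M a b = chainProd d M' a b := by
  induction b with
  | zero => simp [chainProd]
  | succ b ih =>
      by_cases hba : b + 1 = a
      · simp [chainProd, hba]
      · rcases Nat.lt_or_ge b a with hb | hb
        · have hba2 : b + 1 < a := by omega
          rw [chainProd_of_lt M hba2, chainProd_of_lt M' hba2]
        · rw [chainProd_succ M hb, chainProd_succ M' hb,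
            ih (fun i hi hib => h i hi (by omega)), h b hb (by omega)]

variable {k : ℕ}

lemma ext_apply (M : ∀ i : Fin k, Matrix (Fin (d (i.1 + 1))) (Fin (d i.1)) ℝ)
    {i : ℕ} (hi : i < k) : ext d k M i = M ⟨i, hi⟩ := by simp [ext, hi]

lemma ext_update_of_ne (M : ∀ i : Fin k, Matrix (Fin (d (i.1 + 1))) (Fin (d i.1)) ℝ)
    {i : ℕ} (hi : i < k) (X : Matrix (Fin (d (i + 1))) (Fin (d i)) ℝ)
    {j : ℕ} (hj : j ≠ i) :
    ext d k (Function.update M ⟨i, hi⟩ X) j = ext d k M j := by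
  unfold ext
  by_cases h : j < k
  · simp only [dif_pos h]
    rw [Function.update_of_ne (by simp [Fin.ext_iff, hj])]
  · simp only [dif_neg h]

lemma ext_update_self (M : ∀ i : Fin k, Matrix (Fin (d (i.1 + 1))) (Fin (d i.1)) ℝ)
    {i : ℕ} (hi : i < k) (X : Matrix (Fin (d (i + 1))) (Fin (d i)) ℝ) :
    ext d k (Function.update M ⟨i, hi⟩ X) i = X := by
  simp [ext, hi]

lemma mu_update (M : ∀ i : Fin k, Matrix (Fin (d (i.1 + 1))) (Fin (d i.1)) ℝ)
    {i : ℕ} (hi : i < k) (X : Matrix (Fin (d (i + 1))) (Fin (d i)) ℝ) :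
    chainProd d (ext d k (Function.update M ⟨i, hi⟩ X)) 0 k =
      chainProd d (ext d k M) (i + 1) k * X * chainProd d (ext d k M) 0 i := by
  rw [chainProd_split _ (Nat.zero_le (i + 1)) hi,
    chainProd_succ _ (Nat.zero_le i), ext_update_self M hi X,
    chainProd_congr (M' := ext d k M) (fun j hj1 hj2 => ext_update_of_ne M hi X (by omega)),
    chainProd_congr (a := 0) (b := i) (M' := ext d k M)
      (fun j hj1 hj2 => ext_update_of_ne M hi X (by omega)),
    Matrix.mul_assoc]

lemma mu_split (M : ∀ i : Fin k, Matrix (Fin (d (i.1 + 1))) (Fin (d i.1)) ℝ)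
    {i : ℕ} (hi : i < k) :
    chainProd d (ext d k M) 0 k =
      chainProd d (ext d k M) (i + 1) k * M ⟨i, hi⟩ * chainProd d (ext d k M) 0 i := by
  conv_lhs => rw [← Function.update_eq_self ⟨i, hi⟩ M]
  exact mu_update M hi (M ⟨i, hi⟩)

/-- The loss function. -/
def LL (d : ℕ → ℕ) (k : ℕ) (f : Matrix (Fin (d k)) (Fin (d 0)) ℝ → ℝ)
    (N : ∀ i : Fin k, Matrix (Fin (d (i.1 + 1))) (Fin (d i.1)) ℝ) : ℝ :=
  f (chainProd d (ext d k N) 0 k)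

lemma curve_continuous (M : ∀ i : Fin k, Matrix (Fin (d (i.1 + 1))) (Fin (d i.1)) ℝ)
    {i : ℕ} (hi : i < k) (Δ : Matrix (Fin (d (i + 1))) (Fin (d i)) ℝ) :
    Continuous (fun t : ℝ => Function.update M ⟨i, hi⟩ (M ⟨i, hi⟩ + t • Δ)) := by
  apply continuous_pi
  intro j
  by_cases hj : j = (⟨i, hi⟩ : Fin k)
  · subst hj
    simp only [Function.update_self]
    exact continuous_const.add (continuous_id.smul continuous_const)
  · simp only [Function.update_of_ne hj]
    exact continuous_const

lemma slice_deriv_zero {f : Matrix (Fin (d k)) (Fin (d 0)) ℝ → ℝ}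
    (hdiff : Differentiable ℝ f)
    {M : ∀ i : Fin k, Matrix (Fin (d (i.1 + 1))) (Fin (d i.1)) ℝ}
    (hloc : IsLocalMin (LL d k f) M) {i : ℕ} (hi : i < k)
    (Δ : Matrix (Fin (d (i + 1))) (Fin (d i)) ℝ) :
    fderiv ℝ f (chainProd d (ext d k M) 0 k)
      (chainProd d (ext d k M) (i + 1) k * Δ * chainProd d (ext d k M) 0 i) = 0 := by
  set W := chainProd d (ext d k M) 0 k with hW
  set E := chainProd d (ext d k M) (i + 1) k * Δ * chainProd d (ext d k M) 0 i with hE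
  have key : ∀ t : ℝ,
      chainProd d (ext d k (Function.update M ⟨i, hi⟩ (M ⟨i, hi⟩ + t • Δ))) 0 k
        = W + t • E := by
    intro t
    rw [mu_update M hi, hW, mu_split M hi, hE]
    rw [Matrix.mul_add, Matrix.add_mul, Matrix.mul_smul, Matrix.smul_mul]
  have hmin : IsLocalMin (fun t : ℝ => f (W + t • E)) 0 := by
    have hc : Filter.Tendsto (fun t : ℝ => Function.update M ⟨i, hi⟩ (M ⟨i, hi⟩ + t • Δ))
        (nhds 0) (nhds M) := by
      have h1 := (curve_continuous M hi Δ).tendsto (0 : ℝ)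
      have h0 : Function.update M ⟨i, hi⟩ (M ⟨i, hi⟩ + (0:ℝ) • Δ) = M := by
        simp [Function.update_eq_self]
      rwa [h0] at h1
    have hev := hc.eventually hloc
    have hLM : LL d k f M = f (W + (0:ℝ) • E) := by simp [LL, hW]
    refine Filter.Eventually.mono hev (fun t ht => ?_)
    show f (W + (0:ℝ) • E) ≤ f (W + t • E)
    rw [← hLM]
    calc LL d k f M ≤ LL d k f (Function.update M ⟨i, hi⟩ (M ⟨i, hi⟩ + t • Δ)) := ht
      _ = f (W + t • E) := by rw [LL, key t]
  have hd : HasDerivAt (fun t : ℝ => f (W + t • E)) (fderiv ℝ f W E) 0 := by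
    have h1 : HasDerivAt (fun t : ℝ => W + t • E) E 0 := by
      have := ((hasDerivAt_id (0 : ℝ)).smul_const E).const_add W
      simp only [id_eq, one_smul] at this; exact this
    have hf : HasFDerivAt f (fderiv ℝ f W) ((fun t : ℝ => W + t • E) 0) := by
      simpa using (hdiff W).hasFDerivAt
    exact hf.comp_hasDerivAt 0 h1
  exact hmin.hasDerivAt_eq_zero hd

open Matrix

lemma mul_vecMulVec' {a b c : ℕ} (A : Matrix (Fin a) (Fin b) ℝ) (p : Fin b → ℝ)
    (v : Fin c → ℝ) : A * vecMulVec p v = vecMulVec (A.mulVec p) v := by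
  ext i j
  simp [Matrix.mul_apply, vecMulVec_apply, Matrix.mulVec, dotProduct,
    Finset.sum_mul, mul_assoc]

lemma vecMulVec_mul' {a b c : ℕ} (p : Fin a → ℝ) (v : Fin b → ℝ)
    (B : Matrix (Fin b) (Fin c) ℝ) : vecMulVec p v * B = vecMulVec p (Matrix.vecMul v B) := by
  ext i j
  simp only [Matrix.mul_apply, vecMulVec_apply, Matrix.vecMul, dotProduct,
    Finset.mul_sum, mul_assoc]

lemma vecMulVec_mulVec' {a b : ℕ} (w : Fin a → ℝ) (v : Fin b → ℝ) (p : Fin b → ℝ) :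
    (vecMulVec w v).mulVec p = (v ⬝ᵥ p) • w := by
  ext i
  simp only [vecMulVec_apply, Matrix.mulVec, dotProduct, Pi.smul_apply,
    smul_eq_mul, Finset.sum_mul]
  congr 1; ext x; ring

lemma vecMul_vecMulVec' {a b : ℕ} (q : Fin a → ℝ) (w : Fin a → ℝ) (v : Fin b → ℝ) :
    Matrix.vecMul q (vecMulVec w v) = (q ⬝ᵥ w) • v := by
  ext j
  simp only [vecMulVec_apply, Matrix.vecMul, dotProduct, Pi.smul_apply,
    smul_eq_mul, Finset.sum_mul]
  congr 1; ext x; ring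

lemma matrix_eq_sum_cols {a b : ℕ} (Y : Matrix (Fin a) (Fin b) ℝ) :
    Y = ∑ c : Fin b, vecMulVec (fun i => Y i c) (Pi.single c 1) := by
  ext i j
  simp [vecMulVec_apply, Pi.single_apply, Finset.sum_ite_eq', Matrix.sum_apply]

lemma matrix_eq_sum_rows {a b : ℕ} (Y : Matrix (Fin a) (Fin b) ℝ) :
    Y = ∑ r : Fin a, vecMulVec (Pi.single r 1) (fun s => Y r s) := by
  ext i j
  simp [vecMulVec_apply, Pi.single_apply, Finset.sum_ite_eq, Matrix.sum_apply]

lemma half_radius {X : Type*} [MetricSpace X] {L : X → ℝ} {x : X} (h : IsLocalMin L x) :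
    ∃ ε > 0, ∀ y, dist y x < ε → L y = L x → IsLocalMin L y := by
  rcases Metric.eventually_nhds_iff_ball.mp h with ⟨ε, hε, hball⟩
  refine ⟨ε / 2, by linarith, fun y hy hLy => ?_⟩
  refine Metric.eventually_nhds_iff_ball.mpr ⟨ε / 2, by linarith, fun z hz => ?_⟩
  rw [hLy]
  refine hball z ?_
  have h1 := Metric.mem_ball.mp hz
  have h2 := dist_triangle z y x
  exact Metric.mem_ball.mpr (by linarith)

theorem Dind {f : Matrix (Fin (d k)) (Fin (d 0)) ℝ → ℝ} (hdiff : Differentiable ℝ f)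
    (hd : ∀ i ≤ k, d k ≤ d i) :
    ∀ (n j : ℕ), j + n + 1 = k →
    ∀ M : ∀ i : Fin k, Matrix (Fin (d (i.1 + 1))) (Fin (d i.1)) ℝ,
      IsLocalMin (LL d k f) M →
    ∀ Y : Matrix (Fin (d k)) (Fin (d j)) ℝ,
      fderiv ℝ f (chainProd d (ext d k M) 0 k) (Y * chainProd d (ext d k M) 0 j) = 0 := by
  intro n
  induction n with
  | zero =>
    intro j hj M hloc Y
    have hj' : j + 1 = k := by omega
    subst hj'
    have hs := slice_deriv_zero hdiff hloc (i := j) (by omega) Y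
    rwa [chainProd_same, Matrix.one_mul] at hs
  | succ n IH =>
    intro j hjk M hloc
    have hjlt : j < k := by omega
    have hj1 : j + 1 ≤ k := by omega
    by_cases hker : ∀ p : Fin (d (j + 1)) → ℝ,
        (chainProd d (ext d k M) (j + 1) k).mulVec p = 0 → p = 0
    · -- `P` injective: `P` is square invertible, use the slice at layer `j` directly
      intro Y
      have hinj : Function.Injective (chainProd d (ext d k M) (j + 1) k).mulVecLin := by
        intro a b hab
        have h0 : (chainProd d (ext d k M) (j + 1) k).mulVec (a - b) = 0 := by
          have h1 : (chainProd d (ext d k M) (j + 1) k).mulVecLin (a - b) = 0 := by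
            rw [map_sub, hab, sub_self]
          simpa [Matrix.mulVecLin_apply] using h1
        exact sub_eq_zero.mp (hker _ h0)
      have hle : d (j + 1) ≤ d k := by
        have := LinearMap.finrank_le_finrank_of_injective hinj
        simpa [Module.finrank_fin_fun] using this
      have heq : Module.finrank ℝ (Fin (d (j + 1)) → ℝ) = Module.finrank ℝ (Fin (d k) → ℝ) := by
        simp [Module.finrank_fin_fun, le_antisymm hle (hd (j + 1) hj1)]
      have hsurj : Function.Surjective (chainProd d (ext d k M) (j + 1) k).mulVecLin :=
        (LinearMap.injective_iff_surjective_of_finrank_eq_finrank heq).mp hinj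
      choose g hg using hsurj
      have hPΔ : chainProd d (ext d k M) (j + 1) k *
          (Matrix.of fun r c => g (fun i' => Y i' c) r) = Y := by
        ext i' c
        have h2 := congrFun (hg (fun i'' => Y i'' c)) i'
        simpa [Matrix.mulVecLin_apply, Matrix.mul_apply, Matrix.mulVec,
          dotProduct] using h2
      have hs := slice_deriv_zero hdiff hloc hjlt (Matrix.of fun r c => g (fun i' => Y i' c) r)
      rwa [hPΔ] at hs
    · -- kernel vector exists: product-preserving perturbation of layer `j`
      push_neg at hker
      obtain ⟨p, hp0, hpne⟩ := hker
      have hpp : p ⬝ᵥ p ≠ 0 := fun h => hpne (dotProduct_self_eq_zero.mp h)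
      obtain ⟨ε, hε, hHR⟩ := half_radius hloc
      have claim : ∀ (c : Fin (d j) → ℝ) (u : Fin (d k) → ℝ),
          fderiv ℝ f (chainProd d (ext d k M) 0 k)
            (vecMulVec u c * chainProd d (ext d k M) 0 j) = 0 := by
        intro c u
        set Δ : Matrix (Fin (d (j + 1))) (Fin (d j)) ℝ := vecMulVec p c with hΔdef
        have hPΔ0 : chainProd d (ext d k M) (j + 1) k * Δ = 0 := by
          rw [hΔdef, mul_vecMulVec', hp0]
          ext i' c'; simp [vecMulVec_apply]
        set t : ℝ := ε / (2 * (‖Δ‖ + 1)) with htdef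
        have ht : 0 < t := by
          apply div_pos hε
          positivity
        set x' := Function.update M ⟨j, hjlt⟩ (M ⟨j, hjlt⟩ + t • Δ) with hx'
        have hprod : chainProd d (ext d k x') 0 k = chainProd d (ext d k M) 0 k := by
          rw [hx', mu_update M hjlt, Matrix.mul_add, Matrix.mul_smul, hPΔ0, smul_zero,
            add_zero, ← mu_split M hjlt]
        have hdist : dist x' M < ε := by
          have hle2 : dist x' M ≤ ε / 2 := by
            refine (dist_pi_le_iff (by linarith)).mpr (fun b => ?_)
            by_cases hb : b = (⟨j, hjlt⟩ : Fin k)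
            · subst hb
              rw [hx', Function.update_self, dist_eq_norm, add_sub_cancel_left, norm_smul]
              have h3 : ‖t‖ = t := abs_of_pos ht
              rw [h3, htdef]
              rw [div_mul_eq_mul_div, div_le_iff₀ (by positivity)]
              have := norm_nonneg Δ
              nlinarith
            · rw [hx', Function.update_of_ne hb, dist_self]
              linarith
          linarith
        have hLeq : LL d k f x' = LL d k f M := by
          unfold LL; rw [hprod]
        have hloc' := hHR x' hdist hLeq
        have hQ1 : chainProd d (ext d k x') 0 (j + 1) =
            (M ⟨j, hjlt⟩ + t • Δ) * chainProd d (ext d k M) 0 j := by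
          rw [chainProd_succ _ (Nat.zero_le j), hx', ext_update_self M hjlt,
            chainProd_congr (M' := ext d k M)
              (fun i' hi1 hi2 => ext_update_of_ne M hjlt _ (by omega))]
        have hQ2 : chainProd d (ext d k M) 0 (j + 1) =
            M ⟨j, hjlt⟩ * chainProd d (ext d k M) 0 j := by
          rw [chainProd_succ _ (Nat.zero_le j), ext_apply M hjlt]
        set Y' : Matrix (Fin (d k)) (Fin (d (j + 1))) ℝ :=
          vecMulVec u ((p ⬝ᵥ p)⁻¹ • p) with hY'
        have h1 := IH (j + 1) (by omega) x' hloc' Y'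
        rw [hprod, hQ1] at h1
        have h2 := IH (j + 1) (by omega) M hloc Y'
        rw [hQ2] at h2
        have hsplit : Y' * ((M ⟨j, hjlt⟩ + t • Δ) * chainProd d (ext d k M) 0 j) =
            Y' * (M ⟨j, hjlt⟩ * chainProd d (ext d k M) 0 j) +
              t • (Y' * (Δ * chainProd d (ext d k M) 0 j)) := by
          rw [Matrix.add_mul, Matrix.smul_mul, Matrix.mul_add, Matrix.mul_smul]
        rw [hsplit, map_add, h2, zero_add, ContinuousLinearMap.map_smul, smul_eq_mul] at h1
        have h3 : fderiv ℝ f (chainProd d (ext d k M) 0 k)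
            (Y' * (Δ * chainProd d (ext d k M) 0 j)) = 0 :=
          (mul_eq_zero.mp h1).resolve_left (ne_of_gt ht)
        have h4 : Y' * (Δ * chainProd d (ext d k M) 0 j) =
            vecMulVec u c * chainProd d (ext d k M) 0 j := by
          rw [← Matrix.mul_assoc, hY', hΔdef, mul_vecMulVec', vecMulVec_mulVec',
            smul_dotProduct, smul_eq_mul, inv_mul_cancel₀ hpp, one_smul]
        rwa [h4] at h3
      intro Y
      have hYdec := matrix_eq_sum_cols Y
      rw [hYdec, Matrix.sum_mul, map_sum]
      exact Finset.sum_eq_zero (fun c _ => claim _ _)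

theorem Dind' {f : Matrix (Fin (d k)) (Fin (d 0)) ℝ → ℝ} (hdiff : Differentiable ℝ f)
    (hd : ∀ i ≤ k, d 0 ≤ d i) :
    ∀ i : ℕ, 1 ≤ i → i ≤ k →
    ∀ M : ∀ i' : Fin k, Matrix (Fin (d (i'.1 + 1))) (Fin (d i'.1)) ℝ,
      IsLocalMin (LL d k f) M →
    ∀ Y : Matrix (Fin (d i)) (Fin (d 0)) ℝ,
      fderiv ℝ f (chainProd d (ext d k M) 0 k) (chainProd d (ext d k M) i k * Y) = 0 := by
  intro i hi1
  induction i, hi1 using Nat.le_induction with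
  | base =>
    intro hk M hloc Y
    have hs := slice_deriv_zero hdiff hloc (i := 0) (by omega) Y
    rw [chainProd_same, Matrix.mul_one] at hs
    simpa using hs
  | succ i hi IH =>
    intro hik M hloc
    have hilt : i < k := by omega
    by_cases hker : ∀ q : Fin (d i) → ℝ,
        Matrix.vecMul q (chainProd d (ext d k M) 0 i) = 0 → q = 0
    · -- `Q` has full row rank; it is square invertible, use slice at layer `i`
      intro Y
      have hinj : Function.Injective (chainProd d (ext d k M) 0 i)ᵀ.mulVecLin := by
        intro a b hab
        have h0 : Matrix.vecMul (a - b) (chainProd d (ext d k M) 0 i) = 0 := by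
          have h1 : (chainProd d (ext d k M) 0 i)ᵀ.mulVecLin (a - b) = 0 := by
            rw [map_sub, hab, sub_self]
          simpa [Matrix.mulVecLin_apply, Matrix.mulVec_transpose, Matrix.sub_vecMul] using h1
        exact sub_eq_zero.mp (hker _ h0)
      have hle : d i ≤ d 0 := by
        have := LinearMap.finrank_le_finrank_of_injective hinj
        simpa [Module.finrank_fin_fun] using this
      have heq : Module.finrank ℝ (Fin (d i) → ℝ) = Module.finrank ℝ (Fin (d 0) → ℝ) := by
        simp [Module.finrank_fin_fun, le_antisymm hle (hd i (by omega))]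
      have hsurj : Function.Surjective (chainProd d (ext d k M) 0 i)ᵀ.mulVecLin :=
        (LinearMap.injective_iff_surjective_of_finrank_eq_finrank heq).mp hinj
      choose g hg using hsurj
      have hΔQ : (Matrix.of fun r s => g (fun c0 => Y r c0) s) *
          chainProd d (ext d k M) 0 i = Y := by
        ext r c0
        have h2 := congrFun (hg (fun c0' => Y r c0')) c0
        simpa [Matrix.mulVecLin_apply, Matrix.mul_apply, Matrix.mulVec_transpose,
          Matrix.vecMul, Matrix.mul_apply, dotProduct] using h2
      have hs := slice_deriv_zero hdiff hloc hilt (Matrix.of fun r s => g (fun c0 => Y r c0) s)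
      rwa [Matrix.mul_assoc, hΔQ] at hs
    · -- left-kernel vector of `Q` exists: product-preserving perturbation of layer `i`
      push_neg at hker
      obtain ⟨q, hq0, hqne⟩ := hker
      have hqq : q ⬝ᵥ q ≠ 0 := fun h => hqne (dotProduct_self_eq_zero.mp h)
      obtain ⟨ε, hε, hHR⟩ := half_radius hloc
      have claim : ∀ (e : Fin (d (i + 1)) → ℝ) (v : Fin (d 0) → ℝ),
          fderiv ℝ f (chainProd d (ext d k M) 0 k)
            (chainProd d (ext d k M) (i + 1) k * vecMulVec e v) = 0 := by
        intro e v
        set Δ : Matrix (Fin (d (i + 1))) (Fin (d i)) ℝ := vecMulVec e q with hΔdef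
        have hΔQ0 : Δ * chainProd d (ext d k M) 0 i = 0 := by
          rw [hΔdef, vecMulVec_mul', hq0]
          ext r s; simp [vecMulVec_apply]
        have hPΔQ0 : chainProd d (ext d k M) (i + 1) k * Δ * chainProd d (ext d k M) 0 i
            = 0 := by
          rw [Matrix.mul_assoc, hΔQ0, Matrix.mul_zero]
        set t : ℝ := ε / (2 * (‖Δ‖ + 1)) with htdef
        have ht : 0 < t := by
          apply div_pos hε
          positivity
        set x' := Function.update M ⟨i, hilt⟩ (M ⟨i, hilt⟩ + t • Δ) with hx'
        have hprod : chainProd d (ext d k x') 0 k = chainProd d (ext d k M) 0 k := by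
          rw [hx', mu_update M hilt, Matrix.mul_add, Matrix.mul_smul, Matrix.add_mul,
            Matrix.smul_mul, hPΔQ0, smul_zero, add_zero, ← mu_split M hilt]
        have hdist : dist x' M < ε := by
          have hle2 : dist x' M ≤ ε / 2 := by
            refine (dist_pi_le_iff (by linarith)).mpr (fun b => ?_)
            by_cases hb : b = (⟨i, hilt⟩ : Fin k)
            · subst hb
              rw [hx', Function.update_self, dist_eq_norm, add_sub_cancel_left, norm_smul]
              have h3 : ‖t‖ = t := abs_of_pos ht
              rw [h3, htdef]
              rw [div_mul_eq_mul_div, div_le_iff₀ (by positivity)]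
              have := norm_nonneg Δ
              nlinarith
            · rw [hx', Function.update_of_ne hb, dist_self]
              linarith
          linarith
        have hLeq : LL d k f x' = LL d k f M := by
          unfold LL; rw [hprod]
        have hloc' := hHR x' hdist hLeq
        have hP1 : chainProd d (ext d k x') i k =
            chainProd d (ext d k M) (i + 1) k * (M ⟨i, hilt⟩ + t • Δ) := by
          rw [chainProd_split _ (Nat.le_succ i) (by omega : i + 1 ≤ k),
            chainProd_succ _ (le_refl i), chainProd_same, Matrix.mul_one, hx',
            ext_update_self M hilt,
            chainProd_congr (M' := ext d k M)
              (fun i' hi1 hi2 => ext_update_of_ne M hilt _ (by omega))]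
        have hP2 : chainProd d (ext d k M) i k =
            chainProd d (ext d k M) (i + 1) k * M ⟨i, hilt⟩ := by
          rw [chainProd_split _ (Nat.le_succ i) (by omega : i + 1 ≤ k),
            chainProd_succ _ (le_refl i), chainProd_same, Matrix.mul_one, ext_apply M hilt]
        set Y' : Matrix (Fin (d i)) (Fin (d 0)) ℝ :=
          vecMulVec ((q ⬝ᵥ q)⁻¹ • q) v with hY'
        have h1 := IH (by omega) x' hloc' Y'
        rw [hprod, hP1] at h1
        have h2 := IH (by omega) M hloc Y'
        rw [hP2] at h2
        have hsplit : chainProd d (ext d k M) (i + 1) k * (M ⟨i, hilt⟩ + t • Δ) * Y' =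
            chainProd d (ext d k M) (i + 1) k * M ⟨i, hilt⟩ * Y' +
              t • (chainProd d (ext d k M) (i + 1) k * Δ * Y') := by
          rw [Matrix.mul_add, Matrix.mul_smul, Matrix.add_mul, Matrix.smul_mul]
        rw [hsplit, map_add, h2, zero_add, ContinuousLinearMap.map_smul, smul_eq_mul] at h1
        have h3 : fderiv ℝ f (chainProd d (ext d k M) 0 k)
            (chainProd d (ext d k M) (i + 1) k * Δ * Y') = 0 :=
          (mul_eq_zero.mp h1).resolve_left (ne_of_gt ht)
        have h4 : chainProd d (ext d k M) (i + 1) k * Δ * Y' =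
            chainProd d (ext d k M) (i + 1) k * vecMulVec e v := by
          rw [Matrix.mul_assoc, hΔdef, hY', vecMulVec_mul', vecMul_vecMulVec',
            dotProduct_smul, smul_eq_mul, inv_mul_cancel₀ hqq, one_smul]
        rwa [h4] at h3
      intro Y
      have hYdec := matrix_eq_sum_rows Y
      rw [hYdec, Matrix.mul_sum, map_sum]
      exact Finset.sum_eq_zero (fun r _ => claim _ _)

lemma convex_global_min {a b : ℕ} (f : Matrix (Fin a) (Fin b) ℝ → ℝ)
    (hconv : ConvexOn ℝ Set.univ f) (hdiff : Differentiable ℝ f)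
    (W : Matrix (Fin a) (Fin b) ℝ) (h0 : fderiv ℝ f W = 0)
    (N : Matrix (Fin a) (Fin b) ℝ) : f W ≤ f N := by
  set g := fun t : ℝ => f (W + t • (N - W)) with hg
  have hgd : HasDerivAt g 0 0 := by
    have h1 : HasDerivAt (fun t : ℝ => W + t • (N - W)) (N - W) 0 := by
      have := ((hasDerivAt_id (0 : ℝ)).smul_const (N - W)).const_add W
      simp only [id_eq, one_smul] at this; exact this
    have hf : HasFDerivAt f (fderiv ℝ f W) ((fun t : ℝ => W + t • (N - W)) 0) := by
      simpa using (hdiff W).hasFDerivAt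
    have h2 := hf.comp_hasDerivAt 0 h1
    have h3 : fderiv ℝ f W (N - W) = 0 := by rw [h0]; rfl
    exact h2.congr_deriv h3
  have hslope : Filter.Tendsto (slope g 0) (nhdsWithin 0 (Set.Ioi 0)) (nhds 0) :=
    (hasDerivAt_iff_tendsto_slope.mp hgd).mono_left
      (nhdsWithin_mono 0 (fun x hx => by simp at hx ⊢; exact ne_of_gt hx))
  have hev : ∀ᶠ t in nhdsWithin 0 (Set.Ioi 0), slope g 0 t ≤ f N - f W := by
    filter_upwards [Ioc_mem_nhdsGT_of_mem (Set.left_mem_Ico.mpr one_pos)] with t ht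
    have harg : W + t • (N - W) = (1 - t) • W + t • N := by module
    have h1 : g t ≤ (1 - t) * f W + t * f N := by
      have h2 := hconv.2 (Set.mem_univ W) (Set.mem_univ N)
        (by linarith [ht.2] : (0:ℝ) ≤ 1 - t) (le_of_lt ht.1) (by ring)
      simpa [hg, harg, smul_eq_mul] using h2
    have hg0 : g 0 = f W := by simp [hg]
    have ht0 : (0:ℝ) < t := ht.1
    rw [slope_def_field, div_le_iff₀ (by linarith : (0:ℝ) < t - 0)]
    nlinarith [h1, hg0]
  have := le_of_tendsto hslope hev
  linarith


/-- Laurent–von Brecht: if the narrowest layer is the input or output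
layer (no bottleneck), then at any local minimum of `L_k` the product `M_k ⋯ M_1`
is a global minimum of `f` over all matrices. -/
theorem stmt_17 (d : ℕ → ℕ) (k : ℕ) (hk : 2 ≤ k)
    (f : Matrix (Fin (d k)) (Fin (d 0)) ℝ → ℝ)
    (hconv : ConvexOn ℝ Set.univ f) (hdiff : Differentiable ℝ f)
    (hNB : (∀ i ≤ k, d 0 ≤ d i) ∨ (∀ i ≤ k, d k ≤ d i))
    (M : ∀ i : Fin k, Matrix (Fin (d (i.1 + 1))) (Fin (d i.1)) ℝ)
    (hloc : IsLocalMin (fun N => f (chainProd d (ext d k N) 0 k)) M) :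
    ∀ N : Matrix (Fin (d k)) (Fin (d 0)) ℝ, f (chainProd d (ext d k M) 0 k) ≤ f N := by

  have hloc' : IsLocalMin (LL d k f) M := hloc
  have h0 : fderiv ℝ f (chainProd d (ext d k M) 0 k) = 0 := by
    rcases hNB with hd0 | hdk
    · apply ContinuousLinearMap.ext
      intro Y
      have h1 := Dind' hdiff hd0 k (by omega) (le_refl k) M hloc' Y
      rwa [chainProd_same, Matrix.one_mul] at h1
    · apply ContinuousLinearMap.ext
      intro Y
      have h1 := Dind hdiff hdk (k - 1) 0 (by omega) M hloc' Y
      rwa [chainProd_same, Matrix.mul_one] at h1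
  intro N
  exact convex_global_min f hconv hdiff _ h0 N
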